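/- Let G be a chordal graph with a clique tree T, and suppose that R_a and R_b are two maximal cliques of G such that no other maximal clique of G contains R_a ∩ R_b. Then R_a and R_b are adjacent in every clique tree of G. -/

import Mathlib

open SimpleGraph

variable {V : Type*}

/-- `S` separates `u` and `w` in `G`: every walk from `u` to `w` meets `S`. -/
def Separates (G : SimpleGraph V) (S : Set V) (u w : V) : Prop :=
  ∀ p : G.Walk u w, ∃ x ∈ p.support, x ∈ S

/-- `S` is a minimal `{u,w}`-separator. -/
def IsMinUWSeparator (G : SimpleGraph V) (S : Set V) (u w : V) : Prop :=
  u ≠ w ∧ ¬ G.Adj u w ∧ u ∉ S ∧ w ∉ S ∧ Separates G S u w ∧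
    ∀ S' ⊂ S, ¬ Separates G S' u w

/-- `S` is a minimal separator of `G`. -/
def IsMinSeparator (G : SimpleGraph V) (S : Set V) : Prop :=
  ∃ u w : V, IsMinUWSeparator G S u w

/-- A vertex is simplicial if its neighborhood is a clique. -/
def IsSimplicial (G : SimpleGraph V) (v : V) : Prop :=
  G.IsClique (G.neighborSet v)

/-- A maximal clique (as a vertex set). -/
def IsMaxClique (G : SimpleGraph V) (s : Set V) : Prop :=
  G.IsClique s ∧ ∀ t : Set V, G.IsClique t → s ⊆ t → s = t

/-- A graph is chordal if it has no induced cycle of length at least 4. -/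
def Chordal (G : SimpleGraph V) : Prop :=
  ∀ n : ℕ, 4 ≤ n → IsEmpty (SimpleGraph.cycleGraph n ↪g G)

/-- The type of maximal cliques of `G`. -/
abbrev MaxCliques (G : SimpleGraph V) := {s : Set V // IsMaxClique G s}

/-- `T` is a clique tree of `G`: a tree on the maximal cliques such that for each vertex
the cliques containing it induce a connected subgraph. -/
def IsCliqueTree (G : SimpleGraph V) (T : SimpleGraph (MaxCliques G)) : Prop :=
  T.IsTree ∧ ∀ v : V, (T.induce {Q : MaxCliques G | v ∈ Q.1}).Connected

/-- The set `X` induces a path in `T` (assuming `T` is a tree: connected with max degree 2). -/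
def InducesPath {α : Type*} (T : SimpleGraph α) (X : Set α) : Prop :=
  (T.induce X).Connected ∧ ∀ x : X, ((T.induce X).neighborSet x).ncard ≤ 2

/-- `T` is a clique path tree of `G`. -/
def IsCliquePathTree (G : SimpleGraph V) (T : SimpleGraph (MaxCliques G)) : Prop :=
  T.IsTree ∧ ∀ v : V, InducesPath T {Q : MaxCliques G | v ∈ Q.1}

/-- `G` is a path graph: the empty graph, or a graph admitting a clique path tree. -/
def IsPathGraph (G : SimpleGraph V) : Prop :=
  IsEmpty V ∨ ∃ T : SimpleGraph (MaxCliques G), IsCliquePathTree G T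

/-- `G` is an interval graph: intersection graph of closed real intervals. -/
def IsIntervalGraph (G : SimpleGraph V) : Prop :=
  ∃ f : V → Set ℝ, (∀ v, ∃ a b : ℝ, a ≤ b ∧ f v = Set.Icc a b) ∧
    ∀ u v : V, u ≠ v → (G.Adj u v ↔ (f u ∩ f v).Nonempty)

/-- `a` is a middle of `b, c`: every walk from `b` to `c` meets `N(a)`. -/
def IsMiddle (G : SimpleGraph V) (a b c : V) : Prop :=
  ∀ p : G.Walk b c, ∃ x ∈ p.support, G.Adj a x

/-- `a, b, c` form an asteroidal triple. -/
def AsteroidalTriple (G : SimpleGraph V) (a b c : V) : Prop :=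
  a ≠ b ∧ a ≠ c ∧ b ≠ c ∧ ¬ G.Adj a b ∧ ¬ G.Adj a c ∧ ¬ G.Adj b c ∧
  (∃ p : G.Walk b c, ∀ x ∈ p.support, ¬ G.Adj a x) ∧
  (∃ p : G.Walk a c, ∀ x ∈ p.support, ¬ G.Adj b x) ∧
  (∃ p : G.Walk a b, ∀ x ∈ p.support, ¬ G.Adj c x)

/-- The closed neighborhood clique `Q_v` of a simplicial vertex. -/
def Qv (G : SimpleGraph V) (v : V) : Set V := insert v (G.neighborSet v)

/-- `S_v`: the vertices of `Q_v` having a neighbor outside `Q_v`. -/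
def Sv (G : SimpleGraph V) (v : V) : Set V :=
  {x | x ∈ Qv G v ∧ ∃ y, y ∉ Qv G v ∧ G.Adj x y}

/-- A simplicial vertex is special if `S_v` is an inclusion-maximal minimal separator. -/
def IsSpecial (G : SimpleGraph V) (v : V) : Prop :=
  IsSimplicial G v ∧ IsMinSeparator G (Sv G v) ∧
    ∀ S : Set V, IsMinSeparator G S → Sv G v ⊆ S → S = Sv G v

/-- Connected components of `G ∖ S` containing a vertex complete to `S`. -/
def CompleteComponents (G : SimpleGraph V) (S : Set V) :
    Set ((G.induce (Sᶜ : Set V)).ConnectedComponent) :=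
  {C | ∃ x : (Sᶜ : Set V), (G.induce (Sᶜ : Set V)).connectedComponentMk x = C ∧
        S ⊆ G.neighborSet x.1}

/-- The wheel graph: an `n`-cycle plus a universal vertex (`none`). -/
def wheelGraph (n : ℕ) : SimpleGraph (Option (Fin n)) :=
  SimpleGraph.fromRel (fun a b =>
    (∃ i j : Fin n, a = some i ∧ b = some j ∧ (SimpleGraph.cycleGraph n).Adj i j) ∨
    (a = none ∧ b ≠ none))

/-- `y` lies on the tree-path between `x` and `z` in `T`. -/
def OnTreePath {α : Type*} (T : SimpleGraph α) (x y z : α) : Prop :=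
  ∃ p : T.Walk x z, p.IsPath ∧ y ∈ p.support


private lemma cliqueTree_path_mem [Fintype V] (G : SimpleGraph V)
    (T' : SimpleGraph (MaxCliques G))
    (hT' : IsCliqueTree G T') (Ra Rb : MaxCliques G) (v : V)
    (hva : v ∈ Ra.1) (hvb : v ∈ Rb.1)
    (p : T'.Walk Ra Rb) (hp : p.IsPath) :
    ∀ Q ∈ p.support, v ∈ Q.1 := by
  classical
  set S : Set (MaxCliques G) := {Q : MaxCliques G | v ∈ Q.1} with hS
  obtain ⟨w⟩ := ((hT'.2 v).preconnected ⟨Ra, hva⟩ ⟨Rb, hvb⟩)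
  set w' : T'.Walk Ra Rb := w.map (SimpleGraph.Embedding.induce S).toHom with hw'
  have hsup : ∀ Q ∈ w'.support, Q ∈ S := by
    intro Q hQ
    replace hQ : Q ∈ w.support.map (SimpleGraph.Embedding.induce (G := T') S).toHom := by
      rw [← SimpleGraph.Walk.support_map]; exact hQ
    rw [List.mem_map] at hQ
    obtain ⟨x, hx, rfl⟩ := hQ
    exact x.2
  have hsup2 : ∀ Q ∈ w'.toPath.1.support, Q ∈ S := fun Q hQ =>
    hsup Q (SimpleGraph.Walk.support_toPath_subset w' hQ)
  have := (hT'.1.existsUnique_path Ra Rb).unique hp w'.toPath.2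
  intro Q hQ
  exact hsup2 Q (this ▸ hQ)

theorem stmt19 [Fintype V] (G : SimpleGraph V) (hG : Chordal G)
    (T : SimpleGraph (MaxCliques G)) (hT : IsCliqueTree G T)
    (Ra Rb : MaxCliques G) (hne : Ra ≠ Rb)
    (honly : ∀ Q : MaxCliques G, Ra.1 ∩ Rb.1 ⊆ Q.1 → Q = Ra ∨ Q = Rb) :
    ∀ T' : SimpleGraph (MaxCliques G), IsCliqueTree G T' → T'.Adj Ra Rb := by
  intro T' hT'
  obtain ⟨p, hp, -⟩ := hT'.1.existsUnique_path Ra Rb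
  cases p with
  | nil => exact absurd rfl hne
  | cons h q =>
    rename_i Q
    have hQ : Q ∈ (SimpleGraph.Walk.cons h q).support := by simp
    have hsub : Ra.1 ∩ Rb.1 ⊆ Q.1 := fun x hx =>
      cliqueTree_path_mem G T' hT' Ra Rb x hx.1 hx.2 _ hp Q hQ
    rcases honly Q hsub with rfl | rfl
    · exact absurd rfl h.ne'
    · exact h
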